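/- Let q, p, v, vᵢ, vᵢ₊₁ ∈ ℝ² be such that vᵢ − q and vᵢ₊₁ − q are linearly independent and v lies in the cone at q spanned by vᵢ and vᵢ₊₁. Let T := convexHull ℝ {v, vᵢ, vᵢ₊₁}, and assume q ∉ T and p ∉ T. If openSegment ℝ q p meets [v, vᵢ] ∪ [v, vᵢ₊₁], then openSegment ℝ q p meets [vᵢ, vᵢ₊₁]. (This is the claim of Section 3.2 of the paper for the case in which the rays bounding vc_m are q vᵢ and q vᵢ₊₁: any line of sight from q blocked by the two sides incident to v remains blocked by the segment vᵢ vᵢ₊₁ after v is deleted, so the deletion of v reveals no new vertex.) -/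

import Mathlib

open Set

/-- Points of the plane. -/
abbrev Pt := EuclideanSpace ℝ (Fin 2)

/-- `x` is an endpoint of the (nondegenerate) closed segment `s`. -/
def IsSegEndpoint (x : Pt) (s : Set Pt) : Prop :=
  ∃ a b : Pt, a ≠ b ∧ s = segment ℝ a b ∧ (x = a ∨ x = b)

/-- An obstacle set: a finite set of nondegenerate closed segments such that any two
distinct segments intersect at most in a point that is a common endpoint of both. -/
def IsObstacleSet (E : Set (Set Pt)) : Prop :=
  E.Finite ∧
  (∀ s ∈ E, ∃ a b : Pt, a ≠ b ∧ s = segment ℝ a b) ∧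
  (∀ s ∈ E, ∀ t ∈ E, s ≠ t → ∀ x ∈ s ∩ t, IsSegEndpoint x s ∧ IsSegEndpoint x t)

/-- `V(E)`: the set of all endpoints of segments of `E`. -/
def Vset (E : Set (Set Pt)) : Set Pt := {x | ∃ s ∈ E, IsSegEndpoint x s}

/-- Two points `p ≠ q` are mutually visible with respect to `E` if the open segment
joining them is disjoint from every segment of `E`. -/
def MutuallyVisible (E : Set (Set Pt)) (p q : Pt) : Prop :=
  p ≠ q ∧ ∀ s ∈ E, openSegment ℝ p q ∩ s = ∅

/-- The cone at `q` spanned by `a` and `b`. -/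
def Cone (q a b : Pt) : Set Pt :=
  {x | ∃ s t : ℝ, 0 ≤ s ∧ 0 ≤ t ∧ x = q + s • (a - q) + t • (b - q)}

/-- A convex combination of three points of a convex set lies in the set. -/
lemma combo3 {s : Set Pt} (hs : Convex ℝ s) {x y z : Pt} (hx : x ∈ s) (hy : y ∈ s)
    (hz : z ∈ s) {α β γ : ℝ} (hα : 0 ≤ α) (hβ : 0 ≤ β) (hγ : 0 ≤ γ)
    (h : α + β + γ = 1) : α • x + β • y + γ • z ∈ s := by
  have h' := hs.sum_mem (t := (Finset.univ : Finset (Fin 3))) (w := ![α, β, γ])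
    (z := ![x, y, z]) ?_ ?_ ?_
  · simpa [Fin.sum_univ_three] using h'
  · intro i _; fin_cases i <;> simpa
  · simpa [Fin.sum_univ_three] using h
  · intro i _; fin_cases i <;> simpa

lemma key_lemma (q p v vi vi1 : Pt) (a b : ℝ) (ha : 0 ≤ a) (hb : 0 ≤ b)
    (hveq : v = q + a • (vi - q) + b • (vi1 - q))
    (hp : p ∉ convexHull ℝ ({v, vi, vi1} : Set Pt))
    (hmeet : ∃ x ∈ openSegment ℝ q p, x ∈ segment ℝ v vi) :
    (openSegment ℝ q p ∩ segment ℝ vi vi1).Nonempty := by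
  obtain ⟨x, hxo, hxs⟩ := hmeet
  obtain ⟨e, t, he, ht, het, hxeq⟩ := hxo
  obtain ⟨m, l, hm, hl, hml, hxeq2⟩ := hxs
  have he' : e = 1 - t := by linarith
  subst he'
  have hl' : l = 1 - m := by linarith
  subst hl'
  have hm1 : m ≤ 1 := by linarith
  have ht1 : t < 1 := by linarith
  have ht0 : (t : ℝ) ≠ 0 := ne_of_gt ht
  have hp' : p = q + ((m * a + (1 - m)) / t) • (vi - q) + ((m * b) / t) • (vi1 - q) := by
    refine smul_right_injective Pt ht0 ?_
    show t • p = t • _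
    have h3 : t • p = (m • v + (1 - m) • vi) - (1 - t) • q := by
      rw [hxeq2, ← hxeq]; abel
    rw [h3, hveq]
    match_scalars <;> field_simp <;> ring
  by_cases hS : t < m * (a + b) + (1 - m)
  · -- success: the ray reaches the segment [vi, vi1] strictly before p
    have hS0 : (0 : ℝ) < m * (a + b) + (1 - m) := lt_trans ht hS
    have hSne : m * (a + b) + (1 - m) ≠ 0 := hS0.ne'
    refine ⟨((m * a + (1 - m)) / (m * (a + b) + (1 - m))) • vi
        + ((m * b) / (m * (a + b) + (1 - m))) • vi1,
      ⟨1 - t / (m * (a + b) + (1 - m)), t / (m * (a + b) + (1 - m)), ?_, ?_, by ring, ?_⟩,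
      ⟨(m * a + (1 - m)) / (m * (a + b) + (1 - m)), (m * b) / (m * (a + b) + (1 - m)),
        ?_, ?_, ?_, rfl⟩⟩
    · have h4 : t / (m * (a + b) + (1 - m)) < 1 := (div_lt_one hS0).2 hS
      linarith
    · positivity
    · rw [hp']; match_scalars <;> field_simp <;> ring
    · exact div_nonneg (by nlinarith) hS0.le
    · exact div_nonneg (mul_nonneg hm hb) hS0.le
    · field_simp; ring
  · exfalso
    push_neg at hS
    by_cases hc : a + b < 1
    · apply hp
      have hD : (0 : ℝ) < t * (1 - (a + b)) := mul_pos ht (by linarith)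
      have hDne : t * (1 - (a + b)) ≠ 0 := hD.ne'
      have hne : 1 - (a + b) ≠ 0 := by linarith
      have hpe : p = ((t - (m * (a + b) + (1 - m))) / (t * (1 - (a + b)))) • v
          + ((a * (1 - t) + (1 - m) * (1 - (a + b))) / (t * (1 - (a + b)))) • vi
          + ((b * (1 - t)) / (t * (1 - (a + b)))) • vi1 := by
        rw [hp', hveq]; match_scalars <;> field_simp <;> ring
      rw [hpe]
      refine combo3 (convex_convexHull ℝ _)
        (subset_convexHull ℝ _ (by simp)) (subset_convexHull ℝ _ (by simp))
        (subset_convexHull ℝ _ (by simp)) ?_ ?_ ?_ ?_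
      · exact div_nonneg (by linarith) hD.le
      · exact div_nonneg (add_nonneg (mul_nonneg ha (by linarith))
          (mul_nonneg (by linarith) (by linarith))) hD.le
      · exact div_nonneg (mul_nonneg hb (by linarith)) hD.le
      · field_simp; ring
    · push_neg at hc
      have h1 : m * 1 ≤ m * (a + b) := by nlinarith
      linarith

theorem stmt_4
    (q p v vi vi1 : Pt)
    (hli : LinearIndependent ℝ ![vi - q, vi1 - q])
    (hv : v ∈ Cone q vi vi1)
    (hq : q ∉ convexHull ℝ ({v, vi, vi1} : Set Pt))
    (hp : p ∉ convexHull ℝ ({v, vi, vi1} : Set Pt))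
    (hmeet : (openSegment ℝ q p ∩ (segment ℝ v vi ∪ segment ℝ v vi1)).Nonempty) :
    (openSegment ℝ q p ∩ segment ℝ vi vi1).Nonempty := by
  obtain ⟨s0, t0, hs0, ht0, hveq⟩ := hv
  obtain ⟨x, hxo, hx⟩ := hmeet
  cases hx with
  | inl h => exact key_lemma q p v vi vi1 s0 t0 hs0 ht0 hveq hp ⟨x, hxo, h⟩
  | inr h =>
      have hveq' : v = q + t0 • (vi1 - q) + s0 • (vi - q) := by rw [hveq]; module
      have hset : ({v, vi1, vi} : Set Pt) = {v, vi, vi1} := by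
        rw [Set.pair_comm vi1 vi]
      have hp2 : p ∉ convexHull ℝ ({v, vi1, vi} : Set Pt) := by rw [hset]; exact hp
      have hres := key_lemma q p v vi1 vi t0 s0 ht0 hs0 hveq' hp2 ⟨x, hxo, h⟩
      rwa [segment_symm] at hres
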